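/- Let f : ℝ → ℝ be three times continuously differentiable on the closed interval [t₀, tₑ] with t₀ < tₑ, and let M₃ ≥ 0 satisfy |f'''(s)| ≤ M₃ for all s ∈ [t₀, tₑ]. Define Δ = tₑ − t₀, the numerical second derivative D = (f'(tₑ) − f'(t₀))/Δ, the beginning-point approximation g₀(t) = f(t₀) + (t − t₀)·f'(t₀) + ½·(t − t₀)²·D, the ending-point approximation gₑ(t) = f(tₑ) + (t − tₑ)·f'(tₑ) + ½·(t − tₑ)²·D, the weight α(t) = (t − t₀)/Δ, and the combined time-varying function x̂(t) = (1 − α(t))·g₀(t) + α(t)·gₑ(t). Then for every t ∈ [t₀, tₑ], |f(t) − x̂(t)| ≤ M₃·[(1 − α(t))·((1/6)·(t − t₀)³ + ½·(t − t₀)²·Δ) + α(t)·((1/6)·(tₑ − t)³ + ½·(tₑ − t)²·Δ)]. -/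

import Mathlib

open Set

lemma aux_mono (a b : ℝ) (φ φ' : ℝ → ℝ)
    (h : ∀ s ∈ Icc a b, HasDerivWithinAt φ (φ' s) (Icc a b) s)
    (h0 : ∀ s ∈ Icc a b, 0 ≤ φ' s) : MonotoneOn φ (Icc a b) :=
  monotoneOn_of_hasDerivWithinAt_nonneg (convex_Icc a b)
    (fun s hs => (h s hs).continuousWithinAt)
    (fun s hs => ((h s (interior_subset hs)).mono interior_subset))
    (fun s hs => h0 s (interior_subset hs))

lemma aux_abs (a b : ℝ) (g g' B B' : ℝ → ℝ)
    (hg : ∀ s ∈ Icc a b, HasDerivWithinAt g (g' s) (Icc a b) s)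
    (hB : ∀ s ∈ Icc a b, HasDerivWithinAt B (B' s) (Icc a b) s)
    (hga : g a = 0) (hBa : B a = 0)
    (hle : ∀ s ∈ Icc a b, |g' s| ≤ B' s) :
    ∀ t ∈ Icc a b, |g t| ≤ B t := by
  intro t htm
  have ha : a ∈ Icc a b := ⟨le_refl a, le_trans htm.1 htm.2⟩
  have h1 : MonotoneOn (fun s => B s - g s) (Icc a b) := by
    refine aux_mono a b _ (fun s => B' s - g' s)
      (fun s hs => (hB s hs).sub (hg s hs)) (fun s hs => ?_)
    have := hle s hs
    linarith [le_abs_self (g' s)]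
  have h2 : MonotoneOn (fun s => B s + g s) (Icc a b) := by
    refine aux_mono a b _ (fun s => B' s + g' s)
      (fun s hs => (hB s hs).add (hg s hs)) (fun s hs => ?_)
    have := hle s hs
    linarith [neg_abs_le (g' s)]
  have e1 := h1 ha htm htm.1
  have e2 := h2 ha htm htm.1
  simp only [hga, hBa] at e1 e2
  rw [abs_le]; constructor <;> simp at e1 e2 <;> linarith

lemma aux_abs' (a b : ℝ) (g g' B B' : ℝ → ℝ)
    (hg : ∀ s ∈ Icc a b, HasDerivWithinAt g (g' s) (Icc a b) s)
    (hB : ∀ s ∈ Icc a b, HasDerivWithinAt B (B' s) (Icc a b) s)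
    (hgb : g b = 0) (hBb : B b = 0)
    (hle : ∀ s ∈ Icc a b, |g' s| ≤ -B' s) :
    ∀ t ∈ Icc a b, |g t| ≤ B t := by
  intro t htm
  have hb : b ∈ Icc a b := ⟨le_trans htm.1 htm.2, le_refl b⟩
  have h1 : MonotoneOn (fun s => g s - B s) (Icc a b) := by
    refine aux_mono a b _ (fun s => g' s - B' s)
      (fun s hs => (hg s hs).sub (hB s hs)) (fun s hs => ?_)
    have := hle s hs
    linarith [neg_abs_le (g' s)]
  have h2 : MonotoneOn (fun s => -g s - B s) (Icc a b) := by
    refine aux_mono a b _ (fun s => -g' s - B' s)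
      (fun s hs => ((hg s hs).neg).sub (hB s hs)) (fun s hs => ?_)
    have := hle s hs
    linarith [le_abs_self (g' s)]
  have e1 := h1 htm hb htm.2
  have e2 := h2 htm hb htm.2
  simp only [hgb, hBb] at e1 e2
  rw [abs_le]; constructor <;> simp at e1 e2 <;> linarith

lemma taylor_left (a b : ℝ) (f f' f'' f''' : ℝ → ℝ)
    (hf : ∀ t ∈ Icc a b, HasDerivWithinAt f (f' t) (Icc a b) t)
    (hf' : ∀ t ∈ Icc a b, HasDerivWithinAt f' (f'' t) (Icc a b) t)
    (hf'' : ∀ t ∈ Icc a b, HasDerivWithinAt f'' (f''' t) (Icc a b) t)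
    (M : ℝ) (hbound : ∀ s ∈ Icc a b, |f''' s| ≤ M) :
    (∀ t ∈ Icc a b, |f' t - f' a - (t-a)*f'' a| ≤ M/2*(t-a)^2) ∧
    (∀ t ∈ Icc a b, |f t - (f a + (t-a)*f' a + (1/2)*(t-a)^2*f'' a)| ≤ M/6*(t-a)^3) := by
  have h2 : ∀ t ∈ Icc a b, |f'' t - f'' a| ≤ M*(t-a) := by
    refine aux_abs a b _ f''' _ (fun _ => M) (fun s hs => (hf'' s hs).sub_const _)
      (fun s hs => ?_) (by simp) (by simp) hbound
    have h : HasDerivAt (fun s => M*(s-a)) (M*1) s := ((hasDerivAt_id s).sub_const a).const_mul M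
    simpa using h.hasDerivWithinAt
  have h1 : ∀ t ∈ Icc a b, |f' t - f' a - (t-a)*f'' a| ≤ M/2*(t-a)^2 := by
    refine aux_abs a b _ (fun s => f'' s - f'' a) _ (fun s => M*(s-a))
      (fun s hs => ?_) (fun s hs => ?_) (by simp) (by simp) h2
    · have h := ((hf' s hs).sub_const (f' a)).fun_sub
        ((((hasDerivAt_id s).sub_const a).mul_const (f'' a)).hasDerivWithinAt)
      simpa using h
    · have h : HasDerivAt (fun s => M/2*(s-a)^2) (M/2*(2*(s-a)^1*1)) s :=
        (((hasDerivAt_id s).sub_const a).pow 2).const_mul (M/2)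
      have h' : HasDerivAt (fun s => M/2*(s-a)^2) (M*(s-a)) s := by convert h using 1; ring
      exact h'.hasDerivWithinAt
  refine ⟨h1, ?_⟩
  refine aux_abs a b _ (fun s => f' s - f' a - (s-a)*f'' a) _ (fun s => M/2*(s-a)^2)
    (fun s hs => ?_) (fun s hs => ?_) (by simp) (by simp) h1
  · have hin : HasDerivWithinAt (fun s => f a + (s-a)*f' a + (1/2)*(s-a)^2*f'' a)
        (0 + 1*f' a + (1/2)*(2*(s-a)^1*1)*f'' a) (Icc a b) s := by
      exact (((hasDerivAt_const s (f a)).add (((hasDerivAt_id s).sub_const a).mul_const (f' a))).add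
        (((((hasDerivAt_id s).sub_const a).pow 2).const_mul (1/2:ℝ)).mul_const (f'' a))).hasDerivWithinAt
    have h := (hf s hs).fun_sub hin
    have h' : HasDerivWithinAt (fun s => f s - (f a + (s-a)*f' a + (1/2)*(s-a)^2*f'' a))
        (f' s - f' a - (s-a)*f'' a) (Icc a b) s := h.congr_deriv (by ring)
    exact h'
  · have h : HasDerivAt (fun s => M/6*(s-a)^3) (M/6*(3*(s-a)^2*1)) s :=
      (((hasDerivAt_id s).sub_const a).pow 3).const_mul (M/6)
    have h' : HasDerivAt (fun s => M/6*(s-a)^3) (M/2*(s-a)^2) s := by convert h using 1; ring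
    exact h'.hasDerivWithinAt

lemma taylor_right (a b : ℝ) (f f' f'' f''' : ℝ → ℝ)
    (hf : ∀ t ∈ Icc a b, HasDerivWithinAt f (f' t) (Icc a b) t)
    (hf' : ∀ t ∈ Icc a b, HasDerivWithinAt f' (f'' t) (Icc a b) t)
    (hf'' : ∀ t ∈ Icc a b, HasDerivWithinAt f'' (f''' t) (Icc a b) t)
    (M : ℝ) (hbound : ∀ s ∈ Icc a b, |f''' s| ≤ M) :
    (∀ t ∈ Icc a b, |f' t - f' b - (t-b)*f'' b| ≤ M/2*(b-t)^2) ∧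
    (∀ t ∈ Icc a b, |f t - (f b + (t-b)*f' b + (1/2)*(t-b)^2*f'' b)| ≤ M/6*(b-t)^3) := by
  have h2 : ∀ t ∈ Icc a b, |f'' t - f'' b| ≤ M*(b-t) := by
    refine aux_abs' a b _ f''' _ (fun _ => -M) (fun s hs => (hf'' s hs).sub_const _)
      (fun s hs => ?_) (by simp) (by simp) (by simpa using hbound)
    have h : HasDerivAt (fun s => M*(b-s)) (M*(0-1)) s :=
      ((hasDerivAt_const s b).sub (hasDerivAt_id s)).const_mul M
    have h' : HasDerivAt (fun s => M*(b-s)) (-M) s := by convert h using 1; ring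
    exact h'.hasDerivWithinAt
  have h1 : ∀ t ∈ Icc a b, |f' t - f' b - (t-b)*f'' b| ≤ M/2*(b-t)^2 := by
    refine aux_abs' a b _ (fun s => f'' s - f'' b) _ (fun s => -(M*(b-s)))
      (fun s hs => ?_) (fun s hs => ?_) (by simp) (by simp) (by intro s hs; simpa using h2 s hs)
    · have h := ((hf' s hs).sub_const (f' b)).fun_sub
        ((((hasDerivAt_id s).sub_const b).mul_const (f'' b)).hasDerivWithinAt)
      simpa using h
    · have h : HasDerivAt (fun s => M/2*(b-s)^2) (M/2*(2*(b-s)^1*(0-1))) s :=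
        (((hasDerivAt_const s b).sub (hasDerivAt_id s)).pow 2).const_mul (M/2)
      have h' : HasDerivAt (fun s => M/2*(b-s)^2) (-(M*(b-s))) s := by convert h using 1; ring
      exact h'.hasDerivWithinAt
  refine ⟨h1, ?_⟩
  refine aux_abs' a b _ (fun s => f' s - f' b - (s-b)*f'' b) _ (fun s => -(M/2*(b-s)^2))
    (fun s hs => ?_) (fun s hs => ?_) (by simp) (by simp) (by intro s hs; simpa using h1 s hs)
  · have hin : HasDerivWithinAt (fun s => f b + (s-b)*f' b + (1/2)*(s-b)^2*f'' b)
        (0 + 1*f' b + (1/2)*(2*(s-b)^1*1)*f'' b) (Icc a b) s := by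
      exact (((hasDerivAt_const s (f b)).add (((hasDerivAt_id s).sub_const b).mul_const (f' b))).add
        (((((hasDerivAt_id s).sub_const b).pow 2).const_mul (1/2:ℝ)).mul_const (f'' b))).hasDerivWithinAt
    have h := (hf s hs).fun_sub hin
    have h' : HasDerivWithinAt (fun s => f s - (f b + (s-b)*f' b + (1/2)*(s-b)^2*f'' b))
        (f' s - f' b - (s-b)*f'' b) (Icc a b) s := h.congr_deriv (by ring)
    exact h'
  · have h : HasDerivAt (fun s => M/6*(b-s)^3) (M/6*(3*(b-s)^2*(0-1))) s :=
      (((hasDerivAt_const s b).sub (hasDerivAt_id s)).pow 3).const_mul (M/6)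
    have h' : HasDerivAt (fun s => M/6*(b-s)^3) (-(M/2*(b-s)^2)) s := by convert h using 1; ring
    exact h'.hasDerivWithinAt

/-- Error bound for the paper's combined time-varying nodal voltage function (62):
the convex combination of the beginning-point and ending-point quadratic Taylor
expansions with the exact second derivative replaced by the numerical
differentiation `D = (f'(tₑ) − f'(t₀))/Δ`, `Δ = tₑ − t₀`.  With weight
`α(t) = (t − t₀)/Δ` and `x̂(t) = (1 − α(t))·g₀(t) + α(t)·gₑ(t)`, for every
`t ∈ [t₀, tₑ]`,
`|f(t) − x̂(t)| ≤ M₃·[(1−α(t))·((1/6)(t−t₀)³ + (1/2)(t−t₀)²Δ)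
                    + α(t)·((1/6)(tₑ−t)³ + (1/2)(tₑ−t)²Δ)]`. -/
theorem combined_time_varying_error
    (t₀ tₑ : ℝ) (ht : t₀ < tₑ)
    (f f' f'' f''' : ℝ → ℝ)
    (hf : ∀ t ∈ Icc t₀ tₑ, HasDerivWithinAt f (f' t) (Icc t₀ tₑ) t)
    (hf' : ∀ t ∈ Icc t₀ tₑ, HasDerivWithinAt f' (f'' t) (Icc t₀ tₑ) t)
    (hf'' : ∀ t ∈ Icc t₀ tₑ, HasDerivWithinAt f'' (f''' t) (Icc t₀ tₑ) t)
    (hf'''c : ContinuousOn f''' (Icc t₀ tₑ))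
    (M₃ : ℝ) (hM₃ : 0 ≤ M₃)
    (hbound : ∀ s ∈ Icc t₀ tₑ, |f''' s| ≤ M₃) :
    ∀ t ∈ Icc t₀ tₑ,
      |f t -
        ((1 - (t - t₀) / (tₑ - t₀)) *
            (f t₀ + (t - t₀) * f' t₀ +
              (1 / 2) * (t - t₀) ^ 2 * ((f' tₑ - f' t₀) / (tₑ - t₀))) +
          ((t - t₀) / (tₑ - t₀)) *
            (f tₑ + (t - tₑ) * f' tₑ +
              (1 / 2) * (t - tₑ) ^ 2 * ((f' tₑ - f' t₀) / (tₑ - t₀))))| ≤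
      M₃ * ((1 - (t - t₀) / (tₑ - t₀)) *
              ((1 / 6) * (t - t₀) ^ 3 + (1 / 2) * (t - t₀) ^ 2 * (tₑ - t₀)) +
            ((t - t₀) / (tₑ - t₀)) *
              ((1 / 6) * (tₑ - t) ^ 3 + (1 / 2) * (tₑ - t) ^ 2 * (tₑ - t₀))) := by
  intro t htm
  have hΔ : 0 < tₑ - t₀ := sub_pos.mpr ht
  obtain ⟨hL1, hL0⟩ := taylor_left t₀ tₑ f f' f'' f''' hf hf' hf'' M₃ hbound
  obtain ⟨hR1, hR0⟩ := taylor_right t₀ tₑ f f' f'' f''' hf hf' hf'' M₃ hbound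
  have hbL := hL1 tₑ ⟨le_of_lt ht, le_refl _⟩
  have hbR := hR1 t₀ ⟨le_refl _, le_of_lt ht⟩
  set Δ : ℝ := tₑ - t₀ with hΔdef
  set D : ℝ := (f' tₑ - f' t₀) / Δ with hDdef
  clear_value D
  clear_value Δ
  have hD0 : |f'' t₀ - D| ≤ M₃ * Δ := by
    have he : f'' t₀ - D = -((f' tₑ - f' t₀ - Δ * f'' t₀) / Δ) := by
      rw [hDdef]; field_simp; ring
    rw [he, abs_neg, abs_div, abs_of_pos hΔ, div_le_iff₀ hΔ]
    nlinarith [hbL, mul_nonneg hM₃ (sq_nonneg Δ)]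
  have hDe : |f'' tₑ - D| ≤ M₃ * Δ := by
    have he : f'' tₑ - D = (f' t₀ - f' tₑ - (t₀ - tₑ) * f'' tₑ) / Δ := by
      rw [hDdef, show (t₀ - tₑ) = -Δ by rw [hΔdef]; ring]; field_simp; ring
    rw [he, abs_div, abs_of_pos hΔ, div_le_iff₀ hΔ]
    nlinarith [hbR, mul_nonneg hM₃ (sq_nonneg Δ)]
  have hT0 := hL0 t htm
  have hTe := hR0 t htm
  set α : ℝ := (t - t₀) / Δ with hαdef
  clear_value α
  have hα0 : 0 ≤ α := hαdef ▸ div_nonneg (by linarith [htm.1]) hΔ.le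
  have hα1 : α ≤ 1 := by rw [hαdef, div_le_one hΔ]; linarith [htm.2]
  have E0 : |f t - (f t₀ + (t - t₀) * f' t₀ + (1 / 2) * (t - t₀) ^ 2 * D)| ≤
      M₃ * ((1 / 6) * (t - t₀) ^ 3 + (1 / 2) * (t - t₀) ^ 2 * Δ) := by
    have heq : f t - (f t₀ + (t - t₀) * f' t₀ + (1 / 2) * (t - t₀) ^ 2 * D) =
        (f t - (f t₀ + (t - t₀) * f' t₀ + (1 / 2) * (t - t₀) ^ 2 * f'' t₀)) +
          (1 / 2) * (t - t₀) ^ 2 * (f'' t₀ - D) := by ring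
    rw [heq]
    have h2 : |(1 / 2) * (t - t₀) ^ 2 * (f'' t₀ - D)| ≤ (1 / 2) * (t - t₀) ^ 2 * (M₃ * Δ) := by
      rw [abs_mul, abs_of_nonneg (by positivity : (0:ℝ) ≤ (1 / 2) * (t - t₀) ^ 2)]
      exact mul_le_mul_of_nonneg_left hD0 (by positivity)
    calc _ ≤ |f t - (f t₀ + (t - t₀) * f' t₀ + (1 / 2) * (t - t₀) ^ 2 * f'' t₀)| +
            |(1 / 2) * (t - t₀) ^ 2 * (f'' t₀ - D)| := abs_add_le _ _
      _ ≤ M₃ / 6 * (t - t₀) ^ 3 + (1 / 2) * (t - t₀) ^ 2 * (M₃ * Δ) := add_le_add hT0 h2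
      _ ≤ M₃ * ((1 / 6) * (t - t₀) ^ 3 + (1 / 2) * (t - t₀) ^ 2 * Δ) := by
          nlinarith [sq_nonneg (t - t₀)]
  have Ee : |f t - (f tₑ + (t - tₑ) * f' tₑ + (1 / 2) * (t - tₑ) ^ 2 * D)| ≤
      M₃ * ((1 / 6) * (tₑ - t) ^ 3 + (1 / 2) * (tₑ - t) ^ 2 * Δ) := by
    have heq : f t - (f tₑ + (t - tₑ) * f' tₑ + (1 / 2) * (t - tₑ) ^ 2 * D) =
        (f t - (f tₑ + (t - tₑ) * f' tₑ + (1 / 2) * (t - tₑ) ^ 2 * f'' tₑ)) +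
          (1 / 2) * (t - tₑ) ^ 2 * (f'' tₑ - D) := by ring
    rw [heq]
    have h2 : |(1 / 2) * (t - tₑ) ^ 2 * (f'' tₑ - D)| ≤ (1 / 2) * (tₑ - t) ^ 2 * (M₃ * Δ) := by
      rw [abs_mul, abs_of_nonneg (by positivity : (0:ℝ) ≤ (1 / 2) * (t - tₑ) ^ 2),
        show (t - tₑ) ^ 2 = (tₑ - t) ^ 2 by ring]
      exact mul_le_mul_of_nonneg_left hDe (by positivity)
    calc _ ≤ |f t - (f tₑ + (t - tₑ) * f' tₑ + (1 / 2) * (t - tₑ) ^ 2 * f'' tₑ)| +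
            |(1 / 2) * (t - tₑ) ^ 2 * (f'' tₑ - D)| := abs_add_le _ _
      _ ≤ M₃ / 6 * (tₑ - t) ^ 3 + (1 / 2) * (tₑ - t) ^ 2 * (M₃ * Δ) := add_le_add hTe h2
      _ ≤ M₃ * ((1 / 6) * (tₑ - t) ^ 3 + (1 / 2) * (tₑ - t) ^ 2 * Δ) := by
          nlinarith [sq_nonneg (tₑ - t)]
  have key : f t -
      ((1 - α) * (f t₀ + (t - t₀) * f' t₀ + (1 / 2) * (t - t₀) ^ 2 * D) +
        α * (f tₑ + (t - tₑ) * f' tₑ + (1 / 2) * (t - tₑ) ^ 2 * D)) =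
      (1 - α) * (f t - (f t₀ + (t - t₀) * f' t₀ + (1 / 2) * (t - t₀) ^ 2 * D)) +
        α * (f t - (f tₑ + (t - tₑ) * f' tₑ + (1 / 2) * (t - tₑ) ^ 2 * D)) := by ring
  rw [key]
  calc _ ≤ (1 - α) * |f t - (f t₀ + (t - t₀) * f' t₀ + (1 / 2) * (t - t₀) ^ 2 * D)| +
        α * |f t - (f tₑ + (t - tₑ) * f' tₑ + (1 / 2) * (t - tₑ) ^ 2 * D)| := by
        have h := abs_add_le ((1 - α) * (f t - (f t₀ + (t - t₀) * f' t₀ + (1 / 2) * (t - t₀) ^ 2 * D)))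
          (α * (f t - (f tₑ + (t - tₑ) * f' tₑ + (1 / 2) * (t - tₑ) ^ 2 * D)))
        rw [abs_mul, abs_mul, abs_of_nonneg hα0,
          abs_of_nonneg (show (0:ℝ) ≤ 1 - α by linarith)] at h
        exact h
    _ ≤ (1 - α) * (M₃ * ((1 / 6) * (t - t₀) ^ 3 + (1 / 2) * (t - t₀) ^ 2 * Δ)) +
        α * (M₃ * ((1 / 6) * (tₑ - t) ^ 3 + (1 / 2) * (tₑ - t) ^ 2 * Δ)) :=
      add_le_add (mul_le_mul_of_nonneg_left E0 (by linarith))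
        (mul_le_mul_of_nonneg_left Ee hα0)
    _ = M₃ * ((1 - α) * ((1 / 6) * (t - t₀) ^ 3 + (1 / 2) * (t - t₀) ^ 2 * Δ) +
        α * ((1 / 6) * (tₑ - t) ^ 3 + (1 / 2) * (tₑ - t) ^ 2 * Δ)) := by ring
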